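/- If γ₁ = a₁/q₁ < γ₂ = a₂/q₂ are consecutive elements of 𝔖𝔉_Q (both in 𝔖𝔉_Q, adjacent when also regarded inside F_Q, i.e., consecutive in F_Q), then q₂ < q₁; in particular q₁ > Q/2. -/

import Mathlib

/-- `a₁/q₁ < a₂/q₂` are consecutive elements of the Farey sequence of order `Q`. -/
def FareyConsec (Q a₁ q₁ a₂ q₂ : ℤ) : Prop :=
  0 < q₁ ∧ q₁ ≤ Q ∧ 0 < q₂ ∧ q₂ ≤ Q ∧ 0 ≤ a₁ ∧ a₁ ≤ q₁ ∧ 0 ≤ a₂ ∧ a₂ ≤ q₂ ∧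
  Int.gcd a₁ q₁ = 1 ∧ Int.gcd a₂ q₂ = 1 ∧ (a₁ : ℚ) / q₁ < (a₂ : ℚ) / q₂ ∧
  ∀ c d : ℤ, 0 < d → d ≤ Q → ¬((a₁ : ℚ) / q₁ < (c : ℚ) / d ∧ (c : ℚ) / d < (a₂ : ℚ) / q₂)

theorem stmt_14 (Q a₁ q₁ a₂ q₂ ab₁ ab₂ : ℤ) (hQ : 1 ≤ Q)
    (hcons : FareyConsec Q a₁ q₁ a₂ q₂)
    (ha₁ : 0 < a₁) (ha₁q : a₁ < q₁) (ha₂ : 0 < a₂) (ha₂q : a₂ < q₂)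
    (hi1 : 1 ≤ ab₁) (hi2 : ab₁ < q₁) (hinv1 : a₁ * ab₁ ≡ 1 [ZMOD q₁])
    (hj1 : 1 ≤ ab₂) (hj2 : ab₂ < q₂) (hinv2 : a₂ * ab₂ ≡ 1 [ZMOD q₂])
    (hh1 : q₁ + a₁ + ab₁ ≤ Q) (hh2 : q₂ + a₂ + ab₂ ≤ Q) :
    q₂ < q₁ ∧ Q < 2 * q₁ := by
  obtain ⟨hq₁, hq₁Q, hq₂, hq₂Q, _, _, _, _, hg1, hg2, hlt, hmid⟩ := hcons
  have hq₁' : (0:ℚ) < (q₁:ℚ) := by exact_mod_cast hq₁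
  have hq₂' : (0:ℚ) < (q₂:ℚ) := by exact_mod_cast hq₂
  have hcross : a₁ * q₂ < a₂ * q₁ := by
    have := (div_lt_div_iff₀ hq₁' hq₂').mp hlt
    exact_mod_cast this
  have hcrossQ : (a₁:ℚ) * q₂ < (a₂:ℚ) * q₁ := by exact_mod_cast hcross
  -- Step 1: Q < q₁ + q₂ via the mediant
  have hQlt : Q < q₁ + q₂ := by
    by_contra h
    push_neg at h
    have hd : (0:ℤ) < q₁ + q₂ := by linarith
    have hd' : (0:ℚ) < ((q₁ + q₂ : ℤ) : ℚ) := by exact_mod_cast hd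
    refine hmid (a₁ + a₂) (q₁ + q₂) hd h ⟨?_, ?_⟩
    · rw [div_lt_div_iff₀ hq₁' hd']
      push_cast
      nlinarith [hcrossQ]
    · rw [div_lt_div_iff₀ hd' hq₂']
      push_cast
      nlinarith [hcrossQ]
  -- Step 2: determinant is 1
  have hD1 : a₂ * q₁ - a₁ * q₂ = 1 := by
    obtain ⟨u, v, huv⟩ := Int.isCoprime_iff_gcd_eq_one.mpr hg1
    set k : ℤ := (Q - (-u)) / q₁ with hk
    set r : ℤ := (Q - (-u)) % q₁ with hr
    have hq₁ne : q₁ ≠ 0 := ne_of_gt hq₁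
    have hr0 : 0 ≤ r := Int.emod_nonneg _ hq₁ne
    have hrq : r < q₁ := Int.emod_lt_of_pos _ hq₁
    have hde : q₁ * k + r = Q - (-u) := Int.mul_ediv_add_emod _ _
    set y : ℤ := Q - r with hy
    set x : ℤ := v + k * a₁ with hx
    have hyk : y = -u + q₁ * k := by omega
    have hkey : q₁ * x - a₁ * y = 1 := by
      rw [hx, hyk]; linear_combination huv
    have hy0 : 0 < y := by omega
    have hyQ : y ≤ Q := by omega
    have hyb : Q - q₁ < y := by omega
    have hy' : (0:ℚ) < (y:ℚ) := by exact_mod_cast hy0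
    have h1 : (a₁:ℚ) / q₁ < (x:ℚ) / y := by
      rw [div_lt_div_iff₀ hq₁' hy']
      exact_mod_cast (by linarith : a₁ * y < x * q₁)
    have h2 : ¬ ((x:ℚ) / y < (a₂:ℚ) / q₂) := fun hlt2 => hmid x y hy0 hyQ ⟨h1, hlt2⟩
    push_neg at h2
    have hE : a₂ * y ≤ x * q₂ := by
      have := (div_le_div_iff₀ hq₂' hy').mp h2
      exact_mod_cast this
    have hid : q₂ = q₁ * (x * q₂ - a₂ * y) + y * (a₂ * q₁ - a₁ * q₂) := by
      linear_combination (-q₂) * hkey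
    have hDge : 1 ≤ a₂ * q₁ - a₁ * q₂ := by linarith
    have hE0 : x * q₂ - a₂ * y = 0 := by
      by_contra hE0
      have hE1 : 1 ≤ x * q₂ - a₂ * y := by omega
      have h1' : q₁ * (x * q₂ - a₂ * y - 1) ≥ 0 :=
        mul_nonneg (le_of_lt hq₁) (by linarith)
      have h2' : y * (a₂ * q₁ - a₁ * q₂ - 1) ≥ 0 :=
        mul_nonneg (le_of_lt hy0) (by linarith)
      nlinarith [hid, h1', h2']
    have hq2D : q₂ = y * (a₂ * q₁ - a₁ * q₂) := by
      linear_combination hid + q₁ * hE0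
    have hya : y * a₂ = y * (x * (a₂ * q₁ - a₁ * q₂)) := by
      linear_combination (-1 : ℤ) * hE0 + x * hq2D
    have ha2D' : a₂ = x * (a₂ * q₁ - a₁ * q₂) :=
      mul_left_cancel₀ (ne_of_gt hy0) hya
    have hdvd : (a₂ * q₁ - a₁ * q₂) ∣ (Int.gcd a₂ q₂ : ℤ) :=
      Int.dvd_coe_gcd ⟨x, by linarith [ha2D']⟩ ⟨y, by linarith [hq2D]⟩
    rw [hg2] at hdvd
    exact Int.eq_one_of_dvd_one (by linarith) (by exact_mod_cast hdvd)
  -- Step 3: q₂ < q₁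
  have hmain : q₂ < q₁ := by
    by_contra h
    push_neg at h
    have hd1 : q₂ ∣ a₂ * ab₂ - 1 := Int.ModEq.dvd hinv2.symm
    have hd2 : q₂ ∣ a₂ * q₁ - 1 := ⟨a₁, by linarith⟩
    have hd3 : q₂ ∣ a₂ * (q₁ - ab₂) := by
      have := dvd_sub hd2 hd1
      have he : a₂ * q₁ - 1 - (a₂ * ab₂ - 1) = a₂ * (q₁ - ab₂) := by ring
      rwa [he] at this
    have hcop : IsCoprime (q₂ : ℤ) a₂ := (Int.isCoprime_iff_gcd_eq_one.mpr hg2).symm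
    have hd4 : q₂ ∣ (q₁ - ab₂) := hcop.dvd_of_dvd_mul_left hd3
    obtain ⟨c, hc⟩ := hd4
    have hc0 : c = 0 := by
      by_contra hc0
      rcases lt_or_gt_of_ne hc0 with hcl | hcl
      · have h1 : c ≤ -1 := by omega
        have h2 : q₂ * c ≤ q₂ * (-1) := mul_le_mul_of_nonneg_left h1 (le_of_lt hq₂)
        linarith
      · have h1 : 1 ≤ c := by omega
        have h2 : q₂ * 1 ≤ q₂ * c := mul_le_mul_of_nonneg_left h1 (le_of_lt hq₂)
        linarith
    rw [hc0, mul_zero] at hc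
    omega
  exact ⟨hmain, by omega⟩
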